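/- Let ≿ be a total preorder on a finite set H, let W ⊆ H and a ∈ W with a ≿ w for all w ∈ W, and let S = { w ∈ W : w ≿ a and a ≿ w }. Then the number of strict linear extensions ≻ of ≿ in which a ≻ w for every w ∈ W \ {a}, multiplied by |S|, equals the total number of strict linear extensions of ≿. (Hence under a uniformly random linear extension, a is preferred to all other elements of W with probability exactly 1/|S|.) -/

import Mathlib

/-- A strict linear order on `H`, given as a relation together with a proof that it is a
strict total order. -/
def StrictLinearOrder (H : Type*) : Type _ :=
  {r : H → H → Prop // IsStrictTotalOrder H r}

/-- A total preorder: a reflexive, transitive and total relation. -/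
def IsTotalPreorderRel {H : Type*} (R : H → H → Prop) : Prop :=
  Reflexive R ∧ Transitive R ∧ ∀ a b : H, R a b ∨ R b a

/-- `r` is a linear extension of the (weak) relation `R`: whenever `a` is strictly preferred to
`b` under `R`, `a` is ranked above `b` by `r`. -/
def IsLinearExtension {H : Type*} (R : H → H → Prop) (r : StrictLinearOrder H) : Prop :=
  ∀ a b : H, R a b → ¬ R b a → r.1 a b

/-- Conjugating a strict linear order by a permutation. -/
def conjSLO {H : Type*} (σ : Equiv.Perm H) (r : StrictLinearOrder H) : StrictLinearOrder H :=
  ⟨fun x y => r.1 (σ x) (σ y), by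
    haveI := r.2
    exact { trichotomous := fun x y h1 h2 => by
              rcases trichotomous_of r.1 (σ x) (σ y) with h | h | h
              · exact absurd h h1
              · exact σ.injective h
              · exact absurd h h2
            irrefl := fun x h => irrefl_of r.1 _ h
            trans := fun x y z h1 h2 => trans_of r.1 h1 h2 }⟩

lemma conjSLO_swap_swap {H : Type*} [DecidableEq H] (a s : H) (r : StrictLinearOrder H) :
    conjSLO (Equiv.swap a s) (conjSLO (Equiv.swap a s) r) = r := by
  apply Subtype.ext
  funext x y
  simp [conjSLO, Equiv.swap_apply_self]

/-- Every nonempty finset has a top element under a strict total order. -/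
lemma exists_topSLO {H : Type*} (r : StrictLinearOrder H) :
    ∀ s : Finset H, s.Nonempty → ∃ m ∈ s, ∀ x ∈ s, x ≠ m → r.1 m x := by
  classical
  haveI := r.2
  intro s
  induction s using Finset.induction with
  | empty => intro h; simp at h
  | insert b t hb ih =>
    intro _
    rcases t.eq_empty_or_nonempty with rfl | ht
    · exact ⟨b, by simp, by simp⟩
    · obtain ⟨m, hm, hmax⟩ := ih ht
      rcases trichotomous_of r.1 b m with h | rfl | h
      · refine ⟨b, Finset.mem_insert_self b t, ?_⟩
        intro x hx hne
        rcases Finset.mem_insert.1 hx with rfl | hx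
        · exact absurd rfl hne
        · rcases eq_or_ne x m with rfl | hxm
          · exact h
          · exact trans_of r.1 h (hmax x hx hxm)
      · exact absurd hm hb
      · refine ⟨m, Finset.mem_insert_of_mem hm, ?_⟩
        intro x hx hne
        rcases Finset.mem_insert.1 hx with rfl | hx
        · exact h
        · exact hmax x hx hne

lemma topSLO_unique {H : Type*} (r : StrictLinearOrder H) {s : Finset H} {m₁ m₂ : H}
    (h1 : m₁ ∈ s) (h2 : m₂ ∈ s) (hm1 : ∀ x ∈ s, x ≠ m₁ → r.1 m₁ x)
    (hm2 : ∀ x ∈ s, x ≠ m₂ → r.1 m₂ x) : m₁ = m₂ := by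
  haveI := r.2
  by_contra h
  exact irrefl_of r.1 m₁ (trans_of r.1 (hm1 m₂ h2 (Ne.symm h)) (hm2 m₁ h1 h))

/-- Let `R` be a total preorder on a finite set `H`, `W ⊆ H`, `a ∈ W` with `a ≿ w` for all
`w ∈ W`, and `S = { w ∈ W : w ~ a }`.  Then the number of strict linear extensions of `R` in
which `a` is ranked above every other element of `W`, multiplied by `|S|`, equals the total
number of strict linear extensions of `R`. -/
theorem stmt_3 {H : Type*} [Finite H]
    (R : H → H → Prop) (hR : IsTotalPreorderRel R)
    (W : Set H) (a : H) (haW : a ∈ W) (hmax : ∀ w ∈ W, R a w) :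
    Nat.card {r : StrictLinearOrder H //
          IsLinearExtension R r ∧ ∀ w ∈ W, w ≠ a → r.1 a w}
        * Nat.card {w : H // w ∈ W ∧ R w a ∧ R a w}
      = Nat.card {r : StrictLinearOrder H // IsLinearExtension R r} := by
  classical
  obtain ⟨hrefl, htrans, htotal⟩ := hR
  haveI : Fintype H := Fintype.ofFinite H
  set Sfin : Finset H := Finset.univ.filter (fun w => w ∈ W ∧ R w a ∧ R a w) with hSfin
  have hmem : ∀ x, x ∈ Sfin ↔ (x ∈ W ∧ R x a ∧ R a x) := by
    intro x; simp [hSfin]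
  have haS : a ∈ Sfin := (hmem a).2 ⟨haW, hrefl a, hrefl a⟩
  have hne : Sfin.Nonempty := ⟨a, haS⟩
  -- swapping two R-equivalent elements preserves R
  have swapP : ∀ s : H, R s a → R a s → ∀ x y : H, R x y →
      R (Equiv.swap a s x) (Equiv.swap a s y) := by
    intro s h1 h2 x y hxy
    have key : ∀ z : H, R (Equiv.swap a s z) z ∧ R z (Equiv.swap a s z) := by
      intro z
      rcases eq_or_ne z a with rfl | hza
      · rw [Equiv.swap_apply_left]; exact ⟨h1, h2⟩
      rcases eq_or_ne z s with rfl | hzs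
      · rw [Equiv.swap_apply_right]; exact ⟨h2, h1⟩
      · rw [Equiv.swap_apply_of_ne_of_ne hza hzs]; exact ⟨hrefl z, hrefl z⟩
    exact htrans (key x).1 (htrans hxy (key y).2)
  -- conjugation by such a swap preserves being a linear extension
  have conjE : ∀ s : H, R s a → R a s → ∀ r : StrictLinearOrder H,
      IsLinearExtension R r → IsLinearExtension R (conjSLO (Equiv.swap a s) r) := by
    intro s h1 h2 r hr x y hxy hnyx
    refine hr _ _ (swapP s h1 h2 x y hxy) (fun hc => hnyx ?_)
    have := swapP s h1 h2 _ _ hc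
    simpa [Equiv.swap_apply_self] using this
  -- the top of Sfin under a strict linear order
  let top : StrictLinearOrder H → H := fun r => (exists_topSLO r Sfin hne).choose
  have top_mem : ∀ r, top r ∈ Sfin := fun r => (exists_topSLO r Sfin hne).choose_spec.1
  have top_spec : ∀ r, ∀ x ∈ Sfin, x ≠ top r → r.1 (top r) x :=
    fun r => (exists_topSLO r Sfin hne).choose_spec.2
  have top_uniq : ∀ r m, m ∈ Sfin → (∀ x ∈ Sfin, x ≠ m → r.1 m x) → top r = m :=
    fun r m hm hspec => topSLO_unique r (top_mem r) hm (top_spec r) hspec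
  -- key 1 : conjugating by swap a (top r) makes a top of W
  have key1 : ∀ r : StrictLinearOrder H, IsLinearExtension R r →
      ∀ w ∈ W, w ≠ a → (conjSLO (Equiv.swap a (top r)) r).1 a w := by
    intro r hr w hwW hwa
    obtain ⟨hmW, hma, ham⟩ := (hmem (top r)).1 (top_mem r)
    show r.1 (Equiv.swap a (top r) a) (Equiv.swap a (top r) w)
    rw [Equiv.swap_apply_left]
    rcases eq_or_ne w (top r) with rfl | hwm
    · rw [Equiv.swap_apply_right]
      exact top_spec r a haS (fun h => hwa h.symm)
    · rw [Equiv.swap_apply_of_ne_of_ne hwa hwm]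
      by_cases hwS : w ∈ Sfin
      · exact top_spec r w hwS hwm
      · have hnwa : ¬ R w a := by
          intro h
          exact hwS ((hmem w).2 ⟨hwW, h, hmax w hwW⟩)
        refine hr _ _ (htrans hma (hmax w hwW)) (fun h => hnwa (htrans h hma))
  -- key 2 : top of the conjugated order is s
  have key2 : ∀ p : StrictLinearOrder H, IsLinearExtension R p →
      (∀ w ∈ W, w ≠ a → p.1 a w) → ∀ s, s ∈ Sfin →
      top (conjSLO (Equiv.swap a s) p) = s := by
    intro p hp htop s hsS
    obtain ⟨hsW, hsa, has⟩ := (hmem s).1 hsS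
    refine top_uniq _ s hsS ?_
    intro x hxS hxs
    obtain ⟨hxW, hxa, hax⟩ := (hmem x).1 hxS
    show p.1 (Equiv.swap a s s) (Equiv.swap a s x)
    rw [Equiv.swap_apply_right]
    rcases eq_or_ne x a with rfl | hxa'
    · rw [Equiv.swap_apply_left]
      exact htop s hsW (Ne.symm hxs)
    · rw [Equiv.swap_apply_of_ne_of_ne hxa' hxs]
      exact htop x hxW hxa'
  rw [← Nat.card_prod]
  apply Nat.card_congr
  refine Equiv.mk
    (fun p => ⟨conjSLO (Equiv.swap a p.2.1) p.1.1,
        conjE p.2.1 p.2.2.2.1 p.2.2.2.2 p.1.1 p.1.2.1⟩)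
    (fun r => (⟨conjSLO (Equiv.swap a (top r.1)) r.1,
        by
          obtain ⟨hmW, hma, ham⟩ := (hmem (top r.1)).1 (top_mem r.1)
          exact ⟨conjE (top r.1) hma ham r.1 r.2, key1 r.1 r.2⟩⟩,
      ⟨top r.1, (hmem (top r.1)).1 (top_mem r.1)⟩))
    ?_ ?_
  · rintro ⟨⟨p, hp, htp⟩, ⟨s, hsW, hsa, has⟩⟩
    have hsS : s ∈ Sfin := (hmem s).2 ⟨hsW, hsa, has⟩
    have htopEq : top (conjSLO (Equiv.swap a s) p) = s := key2 p hp htp s hsS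
    refine Prod.ext ?_ ?_
    · apply Subtype.ext
      show conjSLO (Equiv.swap a (top (conjSLO (Equiv.swap a s) p)))
          (conjSLO (Equiv.swap a s) p) = p
      rw [htopEq, conjSLO_swap_swap]
    · apply Subtype.ext
      exact htopEq
  · rintro ⟨r, hr⟩
    apply Subtype.ext
    show conjSLO (Equiv.swap a (top r)) (conjSLO (Equiv.swap a (top r)) r) = r
    rw [conjSLO_swap_swap]
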